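/- Let t: Σ* ⇀ Ω* be a rational function with suffix-closed domain X = dom(t). Then there exists a constant C (depending only on t) such that for all words u, v, w ∈ Σ* with uw, vw ∈ X and u R_t v, one has ‖t(uw), t(vw)‖ ≤ C·(|u| + |v| + 2). -/

import Mathlib

/-! Common definitions for sliding-window / visibly pushdown formalizations. -/

/-- `γ` grows polynomially: `γ(n) ∈ O(n^k)` for some `k`. -/
def GrowsPolynomially (γ : ℕ → ℕ) : Prop :=
  ∃ k C : ℕ, ∀ n : ℕ, γ n ≤ C * (n + 1) ^ k

/-- `γ` grows exponentially: there is `c > 1` with `γ(n) ≥ c^n` for infinitely many `n`. -/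
def GrowsExponentially (γ : ℕ → ℕ) : Prop :=
  ∃ c : ℝ, 1 < c ∧ ∀ m : ℕ, ∃ n : ℕ, m ≤ n ∧ c ^ n ≤ (γ n : ℝ)

/-- A set of words is suffix-closed. -/
def SuffixClosed {α : Type} (X : Set (List α)) : Prop :=
  ∀ x ∈ X, ∀ s : List α, s <:+ x → s ∈ X

/-- Domain of a partial function presented with `Option`. -/
def pdom {α β : Type} (t : List α → Option β) : Set (List α) := {x | t x ≠ none}

/-- The `t`-growth of `X`: the number of values of `t` on words of `X` of length at most `n`. -/
noncomputable def growthOf {α : Type} {Y : Type} (t : List α → Y) (X : Set (List α)) (n : ℕ) : ℕ :=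
  (t '' {x | x ∈ X ∧ x.length ≤ n}).ncard

/-- Growth of a language: number of its words of length at most `n`. -/
noncomputable def langGrowth {β : Type} (L : Set (List β)) (n : ℕ) : ℕ :=
  {y | y ∈ L ∧ y.length ≤ n}.ncard

/-- Suffix expansion of a (total or partial) function: the tuple of values on all
nonempty suffixes `a₁⋯aₙ, a₂⋯aₙ, …, aₙ` of the input. -/
def cev {α : Type} {Y : Type} (t : List α → Y) (x : List α) : List Y :=
  x.tails.dropLast.map t

/-- Image of `X` under the partial function `t`. -/
def optImage {α β : Type} (t : List α → Option β) (X : Set (List α)) : Set β :=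
  {y | ∃ x ∈ X, t x = some y}

/-- A language is bounded if it is contained in `w₁* w₂* ⋯ w_k*`. -/
def BoundedLang {β : Type} (L : Set (List β)) : Prop :=
  ∃ ws : List (List β), ∀ x ∈ L, ∃ ms : List ℕ, ms.length = ws.length ∧
    x = (List.zipWith (fun (w : List β) (m : ℕ) => (List.replicate m w).flatten) ws ms).flatten

/-- `{u,v}*`: all concatenations of copies of `u` and `v`. -/
def UVStar {α : Type} (u v : List α) : Set (List α) :=
  {w | ∃ l : List (List α), (∀ p ∈ l, p = u ∨ p = v) ∧ w = l.flatten}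

/-- `{u,v}^{≤ n}`: concatenations of at most `n` words, each equal to `u` or `v`. -/
def UVPow {α : Type} (u v : List α) (n : ℕ) : Set (List α) :=
  {w | ∃ l : List (List α), (∀ p ∈ l, p = u ∨ p = v) ∧ l.length ≤ n ∧ w = l.flatten}

/-- The set `{u₂,v₂}{u,v}* Z`. -/
def FoolingSet {α : Type} (u₂ v₂ u v : List α) (Z : Set (List α)) : Set (List α) :=
  {x | ∃ a w z, (a = u₂ ∨ a = v₂) ∧ w ∈ UVStar u v ∧ z ∈ Z ∧ x = a ++ (w ++ z)}

/-- Linear fooling scheme for a partial function `t`. -/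
def IsLinearFoolingScheme {α Y : Type} (t : List α → Option Y)
    (u₂ v₂ u v : List α) (Z : Set (List α)) : Prop :=
  u₂ <:+ u ∧ v₂ <:+ v ∧ u₂.length = v₂.length ∧
  FoolingSet u₂ v₂ u v Z ⊆ pdom t ∧
  ∃ C : ℕ, ∀ n : ℕ, ∃ z ∈ Z, z.length ≤ C * (n + 1) ∧
    ∀ w ∈ UVPow u v n, t (u₂ ++ (w ++ z)) ≠ t (v₂ ++ (w ++ z))

/-- `X` contains a linear fooling set for `t`. -/
def ContainsLinearFoolingSet {α Y : Type} (t : List α → Option Y) (X : Set (List α)) : Prop :=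
  ∃ u₂ v₂ u v Z, IsLinearFoolingScheme t u₂ v₂ u v Z ∧ FoolingSet u₂ v₂ u v Z ⊆ X

/-! ### Transducers and rational functions -/

/-- A finite-state transducer over `(α, β)` with terminal output function. -/
structure Transducer (α β : Type) where
  Q : Type
  finQ : Fintype Q
  I : Set Q
  F : Set Q
  Δ : Set (Q × List α × List β × Q)
  finΔ : Δ.Finite
  o : Q → List β

namespace Transducer

variable {α β : Type}

/-- A run from `p` to `r` with input `x` and output `y`. -/
inductive Run (A : Transducer α β) : A.Q → List α → List β → A.Q → Prop
  | nil (q : A.Q) : Run A q [] [] q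
  | cons {p q r : A.Q} {x₁ x : List α} {y₁ y : List β} :
      (p, x₁, y₁, q) ∈ A.Δ → Run A q x y r → Run A p (x₁ ++ x) (y₁ ++ y) r

/-- The transduction defined by a transducer. -/
def T (A : Transducer α β) : Set (List α × List β) :=
  {p | ∃ q₀ q y, q₀ ∈ A.I ∧ q ∈ A.F ∧ A.Run q₀ p.1 y q ∧ p.2 = y ++ A.o q}

end Transducer

/-- A partial function is rational if its graph is the transduction of some transducer. -/
def IsRationalFun {α β : Type} (t : List α → Option (List β)) : Prop :=
  ∃ A : Transducer α β, ∀ x y, t x = some y ↔ (x, y) ∈ A.T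

/-! ### Right congruences, suffix expansions, critical tuples -/

/-- A right congruence: an equivalence relation compatible with appending on the right. -/
def IsRightCongruence {α : Type} (r : List α → List α → Prop) : Prop :=
  Equivalence r ∧ ∀ x y z : List α, r x y → r (x ++ z) (y ++ z)

/-- Suffix expansion of a relation: words of the same length whose corresponding
nonempty suffixes are all related. -/
def SuffixExpansion {α : Type} (r : List α → List α → Prop) (x y : List α) : Prop :=
  x.length = y.length ∧ ∀ i < x.length, r (x.drop i) (y.drop i)

/-- Number of `r`-classes of words of length at most `n`. -/
noncomputable def classCount {α : Type} (r : List α → List α → Prop) (n : ℕ) : ℕ :=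
  Set.ncard {C : Set (List α) | ∃ x : List α, x.length ≤ n ∧ C = {y | r x y}}

/-- A relation has finite index if it has finitely many classes. -/
def FiniteIndex {α : Type} (r : List α → List α → Prop) : Prop :=
  Set.Finite {C : Set (List α) | ∃ x : List α, C = {y | r x y}}

/-- Critical tuple in a right congruence. -/
def IsCriticalTuple {α : Type} (r : List α → List α → Prop) (u₂ v₂ u v : List α) : Prop :=
  1 ≤ u₂.length ∧ u₂.length = v₂.length ∧ u₂ <:+ u ∧ v₂ <:+ v ∧
  ∀ w ∈ UVStar u v, ¬ r (u₂ ++ w) (v₂ ++ w)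

/-- The Myhill–Nerode right congruence of a language. -/
def MNrel {α : Type} (L : Set (List α)) (x y : List α) : Prop :=
  ∀ z : List α, x ++ z ∈ L ↔ y ++ z ∈ L

/-! ### Suffix distance and the canonical right congruence of a rational function -/

/-- Longest common prefix. -/
def cpre {β : Type} [DecidableEq β] : List β → List β → List β
  | a :: x, b :: y => if a = b then a :: cpre x y else []
  | _, _ => []

/-- `‖x,y‖ = |x| + |y| − 2|x ∧ y|`, where `x ∧ y` is the longest common suffix. -/
def suffDist {β : Type} [DecidableEq β] (x y : List β) : ℕ :=
  x.length + y.length - 2 * (cpre x.reverse y.reverse).length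

/-- Value of a partial function (defaulting to the empty word off the domain). -/
def pval {α β : Type} (t : List α → Option (List β)) (x : List α) : List β :=
  (t x).getD []

/-- The right congruence `R_t` of Reutenauer–Schützenberger. -/
def Rt {α β : Type} [DecidableEq β] (t : List α → Option (List β)) (u v : List α) : Prop :=
  (∀ z : List α, u ++ z ∈ pdom t ↔ v ++ z ∈ pdom t) ∧
  Set.Finite {d : ℕ | ∃ w : List α, u ++ w ∈ pdom t ∧ v ++ w ∈ pdom t ∧
      d = suffDist (pval t (u ++ w)) (pval t (v ++ w))}

/-- Two partial functions are adjacent. -/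
def Adjacent {α β : Type} [DecidableEq β] (t₁ t₂ : List α → Option (List β)) : Prop :=
  Set.Finite {d : ℕ | ∃ w : List α, w ∈ pdom t₁ ∧ w ∈ pdom t₂ ∧
      d = suffDist (pval t₁ w) (pval t₂ w)}

/-! ### Visibly pushdown automata -/

/-- Kinds of letters of a pushdown alphabet. -/
inductive VPKind : Type
  | call : VPKind
  | ret : VPKind
  | intern : VPKind
deriving DecidableEq

/-- A visibly pushdown automaton over the pushdown alphabet determined by `pa`.
The bottom-of-stack symbol `⊥` is represented implicitly by the empty stack. -/
structure VPA (α : Type) (pa : α → VPKind) where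
  Q : Type
  finQ : Fintype Q
  Γ : Type
  finΓ : Fintype Γ
  q₀ : Q
  F : Set Q
  δc : Q → α → Γ × Q
  δr : Q → α → Option Γ → Q
  δi : Q → α → Q

namespace VPA

variable {α : Type} {pa : α → VPKind}

/-- One step of the VPA on a configuration (stack with top at the head, state). -/
def step (A : VPA α pa) (c : List A.Γ × A.Q) (a : α) : List A.Γ × A.Q :=
  match pa a with
  | VPKind.call => ((A.δc c.2 a).1 :: c.1, (A.δc c.2 a).2)
  | VPKind.intern => (c.1, A.δi c.2 a)
  | VPKind.ret =>
    match c.1 with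
    | [] => ([], A.δr c.2 a none)
    | γ :: st => (st, A.δr c.2 a (some γ))

/-- Extended transition function on words. -/
def run (A : VPA α pa) (c : List A.Γ × A.Q) (w : List α) : List A.Γ × A.Q :=
  w.foldl A.step c

/-- The language accepted by a VPA (from the initial configuration `⊥q₀`). -/
def acceptsLang (A : VPA α pa) : Set (List α) :=
  {w | (A.run ([], A.q₀) w).2 ∈ A.F}

/-- Language accepted from a configuration. -/
def AccLang (A : VPA α pa) (c : List A.Γ × A.Q) : Set (List α) :=
  {w | (A.run c w).2 ∈ A.F}

/-- The reachable configurations. -/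
def rConf (A : VPA α pa) : Set (List A.Γ × A.Q) :=
  Set.range (fun w => A.run ([], A.q₀) w)

end VPA

/-- A language is a visibly pushdown language over the pushdown alphabet `pa`. -/
def IsVPL {α : Type} (pa : α → VPKind) (L : Set (List α)) : Prop :=
  ∃ A : VPA α pa, L = A.acceptsLang

/-- Well-matched words over a pushdown alphabet. -/
inductive WellMatched {α : Type} (pa : α → VPKind) : List α → Prop
  | nil : WellMatched pa []
  | intern (a : α) : pa a = VPKind.intern → WellMatched pa [a]
  | append {u v : List α} : WellMatched pa u → WellMatched pa v → WellMatched pa (u ++ v)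
  | wrap {w : List α} {a b : α} : WellMatched pa w → pa a = VPKind.call → pa b = VPKind.ret →
      WellMatched pa (a :: (w ++ [b]))

/-- Descending words: concatenations of well-matched words and return letters. -/
def Descending {α : Type} (pa : α → VPKind) (w : List α) : Prop :=
  ∃ l : List (List α),
    (∀ p ∈ l, WellMatched pa p ∨ ∃ b : α, pa b = VPKind.ret ∧ p = [b]) ∧ w = l.flatten

/-- Length-lexicographic order on configurations `⊥αq` (stacks compared bottom-first). -/
def ConfLe {Q Γ : Type} (ltQ : LinearOrder Q) (ltΓ : LinearOrder Γ)
    (c d : List Γ × Q) : Prop :=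
  c.1.length < d.1.length ∨
    (c.1.length = d.1.length ∧
      (List.Lex ltΓ.lt c.1.reverse d.1.reverse ∨ (c.1 = d.1 ∧ ltQ.le c.2 d.2)))

/-- `rep` chooses from each equivalence class of reachable configurations the
length-lexicographically least representative. -/
def IsRepFun {α : Type} {pa : α → VPKind} (A : VPA α pa)
    (ltQ : LinearOrder A.Q) (ltΓ : LinearOrder A.Γ)
    (rep : List A.Γ × A.Q → List A.Γ × A.Q) : Prop :=
  ∀ c ∈ A.rConf, rep c ∈ A.rConf ∧ A.AccLang (rep c) = A.AccLang c ∧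
    ∀ c' ∈ A.rConf, A.AccLang c' = A.AccLang c → ConfLe ltQ ltΓ (rep c) c'

/-- `ν_A(w)`: the representative of the configuration reached on `w`. -/
def nuA {α : Type} {pa : α → VPKind} (A : VPA α pa)
    (rep : List A.Γ × A.Q → List A.Γ × A.Q) (w : List α) : List A.Γ × A.Q :=
  rep (A.run ([], A.q₀) w)

/-- `σ₀(w)`: the states representing the Myhill–Nerode classes of the nonempty suffixes. -/
def sigma0 {α : Type} {pa : α → VPKind} (A : VPA α pa)
    (rep : List A.Γ × A.Q → List A.Γ × A.Q) (w : List α) : List A.Q :=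
  w.tails.dropLast.map fun s => (nuA A rep s).2

/-- `φ(w)`: the state transformation of a well-matched word. -/
def phiVPA {α : Type} {pa : α → VPKind} (A : VPA α pa) (w : List α) : A.Q → A.Q :=
  fun p => (A.run ([], p) w).2

/-- `σ₁(w) = φ(w) q₂ ⋯ qₙ`, a word over the alphabet `Q^Q ∪ Q`. -/
def sigma1 {α : Type} {pa : α → VPKind} (A : VPA α pa)
    (rep : List A.Γ × A.Q → List A.Γ × A.Q) (w : List α) : List ((A.Q → A.Q) ⊕ A.Q) :=
  Sum.inl (phiVPA A w) :: ((sigma0 A rep w).tail.map Sum.inr)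

/-! ### Real-time right transducers -/

/-- A real-time right transducer (reads its input from right to left). -/
structure RightTransducer (α β : Type) where
  Q : Type
  finQ : Fintype Q
  F : Set Q
  I : Set Q
  Δ : Set (Q × α × List β × Q)
  finΔ : Δ.Finite
  o : Q → List β

namespace RightTransducer

variable {α β : Type}

/-- Input word of a sequence of transitions. -/
def inputOf {Q : Type} (ts : List (Q × α × List β × Q)) : List α :=
  ts.map fun tr => tr.2.1

/-- Output word of a sequence of transitions. -/
def outputOf {Q : Type} (ts : List (Q × α × List β × Q)) : List β :=
  (ts.map fun tr => tr.2.2.1).flatten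

/-- `IsRunFrom A q ts p`: `ts` is a run on its input from the (rightmost) state `p`
to the (leftmost) state `q`; the transitions are listed left to right. -/
def IsRunFrom (A : RightTransducer α β) : A.Q → List (A.Q × α × List β × A.Q) → A.Q → Prop
  | q, [], p => q = p
  | q, tr :: ts, p => tr ∈ A.Δ ∧ tr.1 = q ∧ IsRunFrom A tr.2.2.2 ts p

/-- There is a run on `w` from `p` (right) to `q` (left). -/
def RunOn (A : RightTransducer α β) (q : A.Q) (w : List α) (p : A.Q) : Prop :=
  ∃ ts, A.IsRunFrom q ts p ∧ inputOf ts = w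

/-- `q ⪯ p`: there is a run from `p` to `q`. -/
def Below (A : RightTransducer α β) (q p : A.Q) : Prop :=
  ∃ w, A.RunOn q w p

/-- The partial function defined by a right transducer. -/
def Defines (A : RightTransducer α β) (t : List α → Option (List β)) : Prop :=
  ∀ x y, t x = some y ↔ ∃ p q ts, p ∈ A.F ∧ q ∈ A.I ∧ A.IsRunFrom p ts q ∧
    inputOf ts = x ∧ y = A.o p ++ outputOf ts

/-- Every state occurs on some initial accepting run. -/
def Trim (A : RightTransducer α β) : Prop :=
  ∀ s : A.Q, ∃ p q ts₁ ts₂, p ∈ A.F ∧ q ∈ A.I ∧ A.IsRunFrom p ts₁ s ∧ A.IsRunFrom s ts₂ q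

/-- Every input word has at most one initial accepting run. -/
def Unambiguous (A : RightTransducer α β) : Prop :=
  ∀ p p' q q' ts ts', p ∈ A.F → p' ∈ A.F → q ∈ A.I → q' ∈ A.I →
    A.IsRunFrom p ts q → A.IsRunFrom p' ts' q' → inputOf ts = inputOf ts' →
    p = p' ∧ ts = ts'

/-- `w` is guarded by `p`: some run on `w` from `p` stays in the SCC of `p`. -/
def Guarded (A : RightTransducer α β) (p : A.Q) (w : List α) : Prop :=
  ∃ q', A.RunOn q' w p ∧ A.Below p q'

/-- The transducer is well-behaved: the terminal outputs of guarded accepting runs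
from the same state on words of equal length coincide. -/
def WellBehaved (A : RightTransducer α β) : Prop :=
  ∀ (p q q' : A.Q) ts ts', q ∈ A.F → q' ∈ A.F →
    A.IsRunFrom q ts p → A.IsRunFrom q' ts' p →
    A.Guarded p (inputOf ts) → A.Guarded p (inputOf ts') →
    (inputOf ts).length = (inputOf ts').length →
    A.o q ++ outputOf ts = A.o q' ++ outputOf ts'

end RightTransducer

/-! ### The Parikh-like map Ψ -/

/-- `Ψ(w)`: each letter of `w` paired with its position counted from the right (1-based). -/
def Psi {α : Type} (w : List α) : Set (α × ℕ) :=
  {p | ∃ i : ℕ, w[i]? = some p.1 ∧ p.2 = w.length - i}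

/-- `Ψ(L) = ⋃_{w ∈ L} Ψ(w)`. -/
def PsiL {α : Type} (L : Set (List α)) : Set (α × ℕ) :=
  ⋃ w ∈ L, Psi w

namespace S11

variable {B : Type} [DecidableEq B]

def pd (x y : List B) : ℕ := x.length + y.length - 2 * (cpre x y).length

lemma cpre_comm (x y : List B) : cpre x y = cpre y x := by
  induction x generalizing y with
  | nil => cases y <;> simp [cpre]
  | cons a x ih =>
    cases y with
    | nil => simp [cpre]
    | cons b y =>
      simp only [cpre]
      rcases eq_or_ne a b with rfl | h
      · simp [ih]
      · simp [h, Ne.symm h]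

lemma cpre_prefix_left (x y : List B) : cpre x y <+: x := by
  induction x generalizing y with
  | nil => cases y <;> simp [cpre]
  | cons a x ih =>
    cases y with
    | nil => simp [cpre]
    | cons b y =>
      simp only [cpre]
      rcases eq_or_ne a b with rfl | h
      · simpa using ih y
      · simp [h]

lemma cpre_prefix_right (x y : List B) : cpre x y <+: y := by
  rw [cpre_comm]; exact cpre_prefix_left y x

lemma cpre_length_le_left (x y : List B) : (cpre x y).length ≤ x.length :=
  (cpre_prefix_left x y).length_le

lemma cpre_length_le_right (x y : List B) : (cpre x y).length ≤ y.length :=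
  (cpre_prefix_right x y).length_le

lemma cpre_append (z x y : List B) : cpre (z ++ x) (z ++ y) = z ++ cpre x y := by
  induction z with
  | nil => simp
  | cons a z ih => simp [cpre, ih]

lemma pd_comm (x y : List B) : pd x y = pd y x := by
  unfold pd; rw [cpre_comm]; omega

lemma pd_append_left (z x y : List B) : pd (z ++ x) (z ++ y) = pd x y := by
  unfold pd
  rw [cpre_append]
  have h1 := cpre_length_le_left x y
  have h2 := cpre_length_le_right x y
  simp only [List.length_append]
  omega

lemma pd_le (x y : List B) : pd x y ≤ x.length + y.length := by
  unfold pd; omega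

lemma length_le_pd_add (x y : List B) : x.length ≤ pd x y + y.length := by
  have h1 := cpre_length_le_left x y
  have h2 := cpre_length_le_right x y
  unfold pd; omega

lemma take_eq_take_of_pd_le {x y : List B} {D m : ℕ} (h : pd x y ≤ D)
    (hm : m + D ≤ x.length) (hm' : m + D ≤ y.length) : x.take m = y.take m := by
  have h1 := cpre_length_le_left x y
  have h2 := cpre_length_le_right x y
  have hc : m ≤ (cpre x y).length := by unfold pd at h; omega
  obtain ⟨r, hr⟩ := cpre_prefix_left x y
  obtain ⟨s, hs⟩ := cpre_prefix_right x y
  have e1 : x.take m = (cpre x y).take m := by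
    conv_lhs => rw [← hr]
    rw [List.take_append_of_le_length hc]
  have e2 : y.take m = (cpre x y).take m := by
    conv_lhs => rw [← hs]
    rw [List.take_append_of_le_length hc]
  rw [e1, e2]




variable {B : Type}

def wpow (w : List B) (k : ℕ) : List B := (List.replicate k w).flatten

@[simp] lemma wpow_zero (w : List B) : wpow w 0 = [] := rfl

lemma wpow_succ (w : List B) (k : ℕ) : wpow w (k+1) = w ++ wpow w k := by
  simp [wpow, List.replicate_succ]

@[simp] lemma wpow_one (w : List B) : wpow w 1 = w := by simp [wpow]

lemma wpow_length (w : List B) (k : ℕ) : (wpow w k).length = k * w.length := by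
  induction k with
  | zero => simp
  | succ k ih => rw [wpow_succ]; simp [ih]; ring

variable {β : List B}

def cyc (β : List B) (hb : 0 < β.length) (off len : ℕ) : List B :=
  (List.range len).map fun i => β.get ⟨(off + i) % β.length, Nat.mod_lt _ hb⟩

@[simp] lemma cyc_length (β : List B) (hb : 0 < β.length) (off len : ℕ) :
    (cyc β hb off len).length = len := by simp [cyc]

lemma cyc_add (β : List B) (hb : 0 < β.length) (off m n : ℕ) :
    cyc β hb off (m + n) = cyc β hb off m ++ cyc β hb (off + m) n := by
  unfold cyc
  rw [List.range_add, List.map_append, List.map_map]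
  congr 1
  apply List.map_congr_left
  intro i _
  simp [Function.comp]
  congr 2
  omega

lemma cyc_shift (β : List B) (hb : 0 < β.length) (off len : ℕ) :
    cyc β hb (off + β.length) len = cyc β hb off len := by
  unfold cyc
  apply List.map_congr_left
  intro i _
  congr 1
  apply Fin.ext
  show (off + β.length + i) % β.length = (off + i) % β.length
  rw [Nat.add_right_comm, Nat.add_mod_right]

@[simp] lemma cyc_zero_len (hb : 0 < β.length) (off : ℕ) : cyc β hb off 0 = [] := rfl

lemma cyc_shift_mul (β : List B) (hb : 0 < β.length) (off len k : ℕ) :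
    cyc β hb (off + k * β.length) len = cyc β hb off len := by
  induction k with
  | zero => simp
  | succ k ih => rw [Nat.succ_mul, ← Nat.add_assoc, cyc_shift, ih]

lemma cyc_self (β : List B) (hb : 0 < β.length) : cyc β hb 0 β.length = β := by
  apply List.ext_get
  · simp
  intro i h1 h2
  simp only [cyc, List.get_eq_getElem, List.getElem_map, List.getElem_range]
  simp only [cyc_length] at h1
  have h3 : (0 + i) % β.length = i := by
    rw [Nat.zero_add]; exact Nat.mod_eq_of_lt (by omega)
  have h4 : i % β.length = i := Nat.mod_eq_of_lt (by omega)
  simp [h3, h4]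

lemma cyc_take (β : List B) (hb : 0 < β.length) (off m len : ℕ) (h : m ≤ len) :
    (cyc β hb off len).take m = cyc β hb off m := by
  obtain ⟨n, rfl⟩ := Nat.exists_eq_add_of_le h
  rw [cyc_add, List.take_append_of_le_length (by simp), List.take_of_length_le (by simp)]

lemma cyc_wpow (β : List B) (hb : 0 < β.length) (off k : ℕ) :
    wpow (cyc β hb off β.length) k = cyc β hb off (k * β.length) := by
  induction k with
  | zero => simp
  | succ k ih =>
    rw [wpow_succ, ih, Nat.succ_mul, Nat.add_comm (k * β.length), cyc_add, cyc_shift]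




variable {B : Type} [DecidableEq B]

lemma take_app_len_add (x y : List B) (n : ℕ) :
    (x ++ y).take (x.length + n) = x ++ y.take n := by
  rw [List.take_append]
  congr 1
  · rw [List.take_of_length_le (by omega)]
  · congr 1; omega

lemma wpow_nil (k : ℕ) : wpow ([] : List B) k = [] := by
  induction k with
  | zero => rfl
  | succ k ih => rw [wpow_succ, ih]; rfl

lemma wpow_eq_cyc (β : List B) (hb : 0 < β.length) (k : ℕ) :
    wpow β k = cyc β hb 0 (k * β.length) := by
  conv_lhs => rw [← cyc_self β hb]
  exact cyc_wpow β hb 0 k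


lemma lemmaM_core (β β' γ γ' a a' : List B) (D : ℕ)
    (hb : 0 < β.length) (hlen : β.length = β'.length) (hg : γ.length ≤ γ'.length)
    (h : ∀ k, pd (γ ++ (wpow β k ++ a)) (γ' ++ (wpow β' k ++ a')) ≤ D) :
    ∀ k, pd (γ ++ (wpow β k ++ a)) (γ' ++ (wpow β' k ++ a'))
        = pd a (cyc β hb 0 (γ'.length - γ.length) ++ a') := by
  obtain ⟨δ, hδ⟩ : ∃ d, d = γ'.length - γ.length := ⟨_, rfl⟩
  rw [← hδ]
  obtain ⟨k₀, hk₀⟩ : ∃ k, k = D + δ + β.length + 1 := ⟨_, rfl⟩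
  have hkb : k₀ ≤ k₀ * β.length := Nat.le_mul_of_pos_right k₀ hb
  have h0 := h k₀
  have hW : (γ ++ (wpow β k₀ ++ a)).length = γ.length + k₀ * β.length + a.length := by
    simp [wpow_length]; ring
  have hW' : (γ' ++ (wpow β' k₀ ++ a')).length
      = γ'.length + k₀ * β.length + a'.length := by
    simp [wpow_length, ← hlen]; ring
  have hE2 : γ ++ cyc β hb 0 δ = γ' := by
    have e := take_eq_take_of_pd_le h0 (m := γ'.length) (by omega) (by omega)
    have lhs : (γ ++ (wpow β k₀ ++ a)).take γ'.length = γ ++ cyc β hb 0 δ := by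
      have hgl : γ'.length = γ.length + δ := by omega
      rw [hgl, take_app_len_add, List.take_append_of_le_length (by rw [wpow_length]; omega),
        wpow_eq_cyc β hb, cyc_take β hb 0 δ _ (by omega)]
    have rhs : (γ' ++ (wpow β' k₀ ++ a')).take γ'.length = γ' := by
      have hgl : γ'.length = γ'.length + 0 := by omega
      rw [hgl, take_app_len_add]; simp
    rw [lhs, rhs] at e
    exact e
  have hE1 : γ ++ cyc β hb 0 (δ + β.length) = γ' ++ β' := by
    have e := take_eq_take_of_pd_le h0 (m := γ'.length + β.length) (by omega) (by omega)
    have lhs : (γ ++ (wpow β k₀ ++ a)).take (γ'.length + β.length)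
        = γ ++ cyc β hb 0 (δ + β.length) := by
      have hgl : γ'.length + β.length = γ.length + (δ + β.length) := by omega
      rw [hgl, take_app_len_add, List.take_append_of_le_length (by rw [wpow_length]; omega),
        wpow_eq_cyc β hb, cyc_take β hb 0 _ _ (by omega)]
    have rhs : (γ' ++ (wpow β' k₀ ++ a')).take (γ'.length + β.length) = γ' ++ β' := by
      rw [take_app_len_add]
      congr 1
      obtain ⟨m, hm⟩ : ∃ m, k₀ = m + 1 := ⟨k₀ - 1, by omega⟩
      rw [hm, wpow_succ, List.append_assoc, hlen, ← Nat.add_zero β'.length,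
        take_app_len_add]
      simp
    rw [lhs, rhs] at e
    exact e
  have hβ' : β' = cyc β hb δ β.length := by
    rw [← hE2, List.append_assoc] at hE1
    have h5 := List.append_cancel_left hE1
    rw [cyc_add] at h5
    have h6 := List.append_cancel_left h5
    rw [Nat.zero_add] at h6
    exact h6.symm
  intro k
  have h1 : wpow β' k = cyc β hb δ (k * β.length) := by
    rw [hβ']; exact cyc_wpow β hb δ k
  have e1 : cyc β hb 0 (δ + k * β.length) = cyc β hb 0 δ ++ cyc β hb δ (k * β.length) := by
    have h7 := cyc_add β hb 0 δ (k * β.length); rwa [Nat.zero_add] at h7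
  have e2 : cyc β hb 0 (k * β.length + δ)
      = cyc β hb 0 (k * β.length) ++ cyc β hb 0 δ := by
    have h3 := cyc_add β hb 0 (k * β.length) δ
    rw [Nat.zero_add] at h3
    have h4 : cyc β hb (k * β.length) δ = cyc β hb 0 δ := by
      have h8 := cyc_shift_mul β hb 0 δ k; rwa [Nat.zero_add] at h8
    rwa [h4] at h3
  have h2 : cyc β hb 0 δ ++ cyc β hb δ (k * β.length)
      = cyc β hb 0 (k * β.length) ++ cyc β hb 0 δ := by
    rw [← e1, Nat.add_comm δ (k * β.length), e2]
  have key : γ' ++ (wpow β' k ++ a') = (γ ++ wpow β k) ++ (cyc β hb 0 δ ++ a') := by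
    rw [← hE2, h1]
    calc (γ ++ cyc β hb 0 δ) ++ (cyc β hb δ (k * β.length) ++ a')
        = γ ++ ((cyc β hb 0 δ ++ cyc β hb δ (k * β.length)) ++ a') := by
          simp [List.append_assoc]
      _ = γ ++ ((cyc β hb 0 (k * β.length) ++ cyc β hb 0 δ) ++ a') := by rw [h2]
      _ = (γ ++ cyc β hb 0 (k * β.length)) ++ (cyc β hb 0 δ ++ a') := by
          simp [List.append_assoc]
      _ = (γ ++ wpow β k) ++ (cyc β hb 0 δ ++ a') := by rw [← wpow_eq_cyc]
  rw [key, ← List.append_assoc, pd_append_left]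

lemma lemmaM (β β' γ γ' a a' : List B) (D : ℕ)
    (h : ∀ k, pd (γ ++ (wpow β k ++ a)) (γ' ++ (wpow β' k ++ a')) ≤ D) :
    pd (γ ++ (β ++ a)) (γ' ++ (β' ++ a')) = pd (γ ++ a) (γ' ++ a') := by
  -- lengths
  have hlen : β.length = β'.length := by
    by_contra hne
    set K : ℕ := D + γ.length + γ'.length + a.length + a'.length + 1 with hK
    have h1 := length_le_pd_add (γ ++ (wpow β K ++ a)) (γ' ++ (wpow β' K ++ a'))
    have h2 := length_le_pd_add (γ' ++ (wpow β' K ++ a')) (γ ++ (wpow β K ++ a))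
    rw [pd_comm] at h2
    have hp := h K
    simp only [List.length_append, wpow_length] at h1 h2
    rcases Nat.lt_or_ge β.length β'.length with hlt | hge
    · have : K * (β.length + 1) ≤ K * β'.length := Nat.mul_le_mul_left K (by omega)
      rw [Nat.mul_add, Nat.mul_one] at this
      omega
    · have hlt : β'.length < β.length := by omega
      have : K * (β'.length + 1) ≤ K * β.length := Nat.mul_le_mul_left K (by omega)
      rw [Nat.mul_add, Nat.mul_one] at this
      omega
  rcases Nat.eq_zero_or_pos β.length with hz | hb
  · -- empty loops
    have hβ : β = [] := List.length_eq_zero_iff.mp hz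
    have hβ' : β' = [] := List.length_eq_zero_iff.mp (by omega)
    subst hβ; subst hβ'
    simp
  -- main case
  have hb' : 0 < β'.length := by omega
  -- wlog γ.length ≤ γ'.length
  rcases Nat.le_total γ.length γ'.length with hg | hg
  · have hc := lemmaM_core β β' γ γ' a a' D hb hlen hg h
    have e1 := hc 1
    have e0 := hc 0
    simp only [wpow_one, wpow_zero, List.nil_append] at e1 e0
    rw [e1, e0]
  · have h' : ∀ k, pd (γ' ++ (wpow β' k ++ a')) (γ ++ (wpow β k ++ a)) ≤ D := by
      intro k; rw [pd_comm]; exact h k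
    have hc := lemmaM_core β' β γ' γ a' a D hb' hlen.symm hg h'
    have e1 := hc 1
    have e0 := hc 0
    simp only [wpow_one, wpow_zero, List.nil_append] at e1 e0
    rw [pd_comm (γ ++ (β ++ a)), pd_comm (γ ++ a), e1, e0]



variable {α β : Type}

/-- One-step transitions of the letter-granular expansion of `A`. -/
def ESet (A : Transducer α β) :
    Set ((A.Q ⊕ ((A.Q × List α × List β × A.Q) × ℕ)) × List α × List β ×
      (A.Q ⊕ ((A.Q × List α × List β × A.Q) × ℕ))) :=
  {e | ∃ d ∈ A.Δ,
    (d.2.1.length ≤ 1 ∧ e = (Sum.inl d.1, d.2.1, d.2.2.1, Sum.inl d.2.2.2)) ∨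
    (2 ≤ d.2.1.length ∧ e = (Sum.inl d.1, d.2.1.take 1, d.2.2.1, Sum.inr (d, 1))) ∨
    (∃ i, 1 ≤ i ∧ i + 1 < d.2.1.length ∧
        e = (Sum.inr (d, i), (d.2.1.drop i).take 1, [], Sum.inr (d, i+1))) ∨
    (∃ i, 1 ≤ i ∧ i + 1 = d.2.1.length ∧
        e = (Sum.inr (d, i), (d.2.1.drop i).take 1, [], Sum.inl d.2.2.2))}

abbrev Conf (A : Transducer α β) := A.Q ⊕ ((A.Q × List α × List β × A.Q) × ℕ)
abbrev EST (A : Transducer α β) := Conf A × List α × List β × Conf A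

def chain (A : Transducer α β) : Conf A → List (EST A) → Conf A → Prop
  | c, [], c' => c = c'
  | c, e :: ts, c' => e ∈ ESet A ∧ e.1 = c ∧ chain A e.2.2.2 ts c'

def einp {A : Transducer α β} (ts : List (EST A)) : List α := (ts.map fun e => e.2.1).flatten
def eout {A : Transducer α β} (ts : List (EST A)) : List β := (ts.map fun e => e.2.2.1).flatten

@[simp] lemma einp_nil {A : Transducer α β} : einp ([] : List (EST A)) = [] := rfl
@[simp] lemma eout_nil {A : Transducer α β} : eout ([] : List (EST A)) = [] := rfl
@[simp] lemma einp_cons {A : Transducer α β} (e : EST A) (ts : List (EST A)) :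
    einp (e :: ts) = e.2.1 ++ einp ts := by simp [einp]
@[simp] lemma eout_cons {A : Transducer α β} (e : EST A) (ts : List (EST A)) :
    eout (e :: ts) = e.2.2.1 ++ eout ts := by simp [eout]
@[simp] lemma einp_append {A : Transducer α β} (ts ts' : List (EST A)) :
    einp (ts ++ ts') = einp ts ++ einp ts' := by simp [einp]
@[simp] lemma eout_append {A : Transducer α β} (ts ts' : List (EST A)) :
    eout (ts ++ ts') = eout ts ++ eout ts' := by simp [eout]

lemma chain_append {A : Transducer α β} {c1 c2 c3 : Conf A} {ts1 ts2 : List (EST A)}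
    (h1 : chain A c1 ts1 c2) (h2 : chain A c2 ts2 c3) : chain A c1 (ts1 ++ ts2) c3 := by
  induction ts1 generalizing c1 with
  | nil => cases h1; exact h2
  | cons e ts ih => exact ⟨h1.1, h1.2.1, ih h1.2.2⟩

lemma chain_split {A : Transducer α β} {c1 c3 : Conf A} {ts1 ts2 : List (EST A)}
    (h : chain A c1 (ts1 ++ ts2) c3) : ∃ c2, chain A c1 ts1 c2 ∧ chain A c2 ts2 c3 := by
  induction ts1 generalizing c1 with
  | nil => exact ⟨c1, rfl, h⟩
  | cons e ts ih =>
    obtain ⟨c2, hc1, hc2⟩ := ih h.2.2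
    exact ⟨c2, ⟨h.1, h.2.1, hc1⟩, hc2⟩

lemma chain_unique {A : Transducer α β} {c c' c'' : Conf A} {ts : List (EST A)}
    (h1 : chain A c ts c') (h2 : chain A c ts c'') : c' = c'' := by
  induction ts generalizing c with
  | nil => exact h1.symm.trans h2
  | cons e ts ih => exact ih h1.2.2 h2.2.2

lemma estep_inp_le_one {A : Transducer α β} {e : EST A} (he : e ∈ ESet A) :
    e.2.1.length ≤ 1 := by
  obtain ⟨d, _, h | h | h | h⟩ := he
  · rw [h.2]; exact h.1
  · rw [h.2]; simp
  · obtain ⟨i, _, _, he⟩ := h; rw [he]; simp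
  · obtain ⟨i, _, _, he⟩ := h; rw [he]; simp

lemma drop_take_one {γ : Type} (l : List γ) (i : ℕ) (h : i < l.length) :
    (l.drop i).take 1 ++ l.drop (i+1) = l.drop i := by
  rw [List.drop_eq_getElem_cons h]
  simp [List.drop_eq_getElem_cons, List.take_cons]


/-- Letter-granular chain for the tail of a long transition. -/
lemma tail_chain {A : Transducer α β} {d : A.Q × List α × List β × A.Q} (hd : d ∈ A.Δ) :
    ∀ n j, 1 ≤ j → j + n + 1 = d.2.1.length →
    ∃ ts : List (EST A), chain A (Sum.inr (d, j)) ts (Sum.inl d.2.2.2) ∧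
      einp ts = d.2.1.drop j ∧ eout ts = [] := by
  intro n
  induction n with
  | zero =>
    intro j hj hlen
    refine ⟨[(Sum.inr (d, j), (d.2.1.drop j).take 1, [], Sum.inl d.2.2.2)],
      ⟨⟨d, hd, Or.inr (Or.inr (Or.inr ⟨j, hj, by omega, rfl⟩))⟩, rfl, rfl⟩, ?_, by simp [eout]⟩
    simp only [einp_cons, einp_nil, List.append_nil]
    rw [List.take_of_length_le (by simp; omega)]
  | succ n ih =>
    intro j hj hlen
    obtain ⟨ts, hch, hinp, hout⟩ := ih (j+1) (by omega) (by omega)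
    refine ⟨(Sum.inr (d, j), (d.2.1.drop j).take 1, [], Sum.inr (d, j+1)) :: ts,
      ⟨⟨d, hd, Or.inr (Or.inr (Or.inl ⟨j, hj, by omega, rfl⟩))⟩, rfl, hch⟩, ?_, by simp [hout]⟩
    simp only [einp_cons, hinp]
    exact drop_take_one _ j (by omega)

/-- A single transition expands to a chain. -/
lemma trans_chain {A : Transducer α β} {d : A.Q × List α × List β × A.Q} (hd : d ∈ A.Δ) :
    ∃ ts : List (EST A), chain A (Sum.inl d.1) ts (Sum.inl d.2.2.2) ∧
      einp ts = d.2.1 ∧ eout ts = d.2.2.1 := by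
  rcases le_or_gt d.2.1.length 1 with hle | hgt
  · exact ⟨[(Sum.inl d.1, d.2.1, d.2.2.1, Sum.inl d.2.2.2)],
      ⟨⟨d, hd, Or.inl ⟨hle, rfl⟩⟩, rfl, rfl⟩, by simp [einp], by simp [eout]⟩
  · obtain ⟨ts, hch, hinp, hout⟩ := tail_chain hd (d.2.1.length - 2) 1 le_rfl (by omega)
    refine ⟨(Sum.inl d.1, d.2.1.take 1, d.2.2.1, Sum.inr (d, 1)) :: ts,
      ⟨⟨d, hd, Or.inr (Or.inl ⟨hgt, rfl⟩)⟩, rfl, hch⟩, ?_, by simp [hout]⟩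
    simp only [einp_cons, hinp]
    exact List.take_append_drop 1 d.2.1

lemma run_to_chain {A : Transducer α β} {p q : A.Q} {x : List α} {y : List β}
    (h : A.Run p x y q) :
    ∃ ts : List (EST A), chain A (Sum.inl p) ts (Sum.inl q) ∧ einp ts = x ∧ eout ts = y := by
  induction h with
  | nil q => exact ⟨[], rfl, rfl, rfl⟩
  | @cons p q r x₁ x y₁ y hd _ ih =>
    obtain ⟨ts1, hch1, hinp1, hout1⟩ := trans_chain (d := (p, x₁, y₁, q)) hd
    obtain ⟨ts2, hch2, hinp2, hout2⟩ := ih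
    exact ⟨ts1 ++ ts2, chain_append hch1 hch2, by simp [hinp1, hinp2],
      by simp [hout1, hout2]⟩

lemma chain_sound_aux {A : Transducer α β} :
    ∀ (ts : List (EST A)) (c : Conf A) (qf : A.Q), chain A c ts (Sum.inl qf) →
    (∀ p, c = Sum.inl p → A.Run p (einp ts) (eout ts) qf) ∧
    (∀ d i, c = Sum.inr (d, i) → ∃ x₂, einp ts = d.2.1.drop i ++ x₂ ∧
      A.Run d.2.2.2 x₂ (eout ts) qf) := by
  intro ts
  induction ts with
  | nil =>
    intro c qf hch
    cases hch
    constructor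
    · intro p hp
      cases hp
      simpa using Transducer.Run.nil qf
    · intro d i hdi
      cases hdi
  | cons e ts ih =>
    intro c qf hch
    obtain ⟨he, he1, hch2⟩ := hch
    obtain ⟨d, hdΔ, hcase⟩ := he
    rcases hcase with ⟨hle, herr⟩ | ⟨hge, herr⟩ | ⟨i, hi1, hi2, herr⟩ | ⟨i, hi1, hi2, herr⟩
    all_goals subst herr
    · -- short transition
      have hIH := (ih _ qf hch2).1 d.2.2.2 rfl
      constructor
      · intro p hp
        rw [← he1] at hp
        cases hp
        simpa using Transducer.Run.cons hdΔ hIH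
      · intro d' i' hdi; rw [hdi] at he1; cases he1
    · -- entry into long transition
      have hIH := (ih _ qf hch2).2 d 1 rfl
      obtain ⟨x₂, hx₂, hrun⟩ := hIH
      constructor
      · intro p hp
        rw [← he1] at hp
        cases hp
        simp only [einp_cons, eout_cons, hx₂]
        rw [← List.append_assoc, List.take_append_drop]
        exact Transducer.Run.cons hdΔ hrun
      · intro d' i' hdi; rw [hdi] at he1; cases he1
    · -- middle of long transition
      have hIH := (ih _ qf hch2).2 d (i+1) rfl
      obtain ⟨x₂, hx₂, hrun⟩ := hIH
      constructor
      · intro p hp; rw [hp] at he1; cases he1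
      · intro d' i' hdi
        rw [← he1] at hdi
        cases hdi
        refine ⟨x₂, ?_, by simpa using hrun⟩
        simp only [einp_cons, hx₂]
        rw [← List.append_assoc, drop_take_one _ i (by omega)]
    · -- last step of long transition
      have hIH := (ih _ qf hch2).1 d.2.2.2 rfl
      constructor
      · intro p hp; rw [hp] at he1; cases he1
      · intro d' i' hdi
        rw [← he1] at hdi
        cases hdi
        refine ⟨einp ts, ?_, by simpa using hIH⟩
        simp only [einp_cons]
        congr 1
        rw [List.take_of_length_le (by simp; omega)]

lemma chain_to_run {A : Transducer α β} {p q : A.Q} {ts : List (EST A)}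
    (h : chain A (Sum.inl p) ts (Sum.inl q)) : A.Run p (einp ts) (eout ts) q :=
  (chain_sound_aux ts _ q h).1 p rfl


lemma einp_wpow {A : Transducer α β} (M : List (EST A)) (k : ℕ) :
    einp (wpow M k) = wpow (einp M) k := by
  induction k with
  | zero => rfl
  | succ k ih => rw [wpow_succ, wpow_succ, einp_append, ih]

lemma eout_wpow {A : Transducer α β} (M : List (EST A)) (k : ℕ) :
    eout (wpow M k) = wpow (eout M) k := by
  induction k with
  | zero => rfl
  | succ k ih => rw [wpow_succ, wpow_succ, eout_append, ih]

lemma chain_wpow {A : Transducer α β} {m : Conf A} {M : List (EST A)}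
    (h : chain A m M m) (k : ℕ) : chain A m (wpow M k) m := by
  induction k with
  | zero => rfl
  | succ k ih => rw [wpow_succ]; exact chain_append h ih

/-- Bound on input lengths of transitions. -/
lemma exists_len_bound (A : Transducer α β) : ∃ L, ∀ d ∈ A.Δ, d.2.1.length ≤ L := by
  have h : ((fun d => d.2.1.length) '' A.Δ).Finite := A.finΔ.image _
  obtain ⟨L, hL⟩ := h.bddAbove
  exact ⟨L, fun d hd => hL ⟨d, hd, rfl⟩⟩

lemma ESet_finite (A : Transducer α β) : (ESet A).Finite := by
  obtain ⟨L, hL⟩ := exists_len_bound A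
  have : ESet A ⊆ (fun p : (A.Q × List α × List β × A.Q) × ℕ × ℕ =>
      let d := p.1
      if p.2.2 = 0 then ((Sum.inl d.1 : Conf A), d.2.1, d.2.2.1, Sum.inl d.2.2.2)
      else if p.2.2 = 1 then (Sum.inl d.1, d.2.1.take 1, d.2.2.1, Sum.inr (d, 1))
      else if p.2.2 = 2 then (Sum.inr (d, p.2.1), (d.2.1.drop p.2.1).take 1, [],
        Sum.inr (d, p.2.1 + 1))
      else (Sum.inr (d, p.2.1), (d.2.1.drop p.2.1).take 1, [], Sum.inl d.2.2.2)) ''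
      (A.Δ ×ˢ (Set.Iic L ×ˢ Set.Iic 3)) := by
    rintro e ⟨d, hd, hc | hc | ⟨i, hi1, hi2, he⟩ | ⟨i, hi1, hi2, he⟩⟩
    · exact ⟨(d, 0, 0), ⟨hd, by simp, by simp⟩, by simp [hc.2]⟩
    · exact ⟨(d, 0, 1), ⟨hd, by simp, by simp⟩, by simp [hc.2]⟩
    · exact ⟨(d, i, 2), ⟨hd, by simp; have := hL d hd; omega, by simp⟩, by simp [he]⟩
    · exact ⟨(d, i, 3), ⟨hd, by simp; have := hL d hd; omega, by simp⟩, by simp [he]⟩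
  exact Set.Finite.subset (Set.Finite.image _
    (A.finΔ.prod ((Set.finite_Iic L).prod (Set.finite_Iic 3)))) this

/-- All configurations that can appear at the end of a chain. -/
def CS (A : Transducer α β) : Set (Conf A) :=
  Set.range Sum.inl ∪ (fun e : EST A => e.2.2.2) '' ESet A

lemma CS_finite (A : Transducer α β) : (CS A).Finite := by
  haveI := A.finQ
  exact (Set.finite_range _).union ((ESet_finite A).image _)

lemma chain_end_mem_CS {A : Transducer α β} {c c' : Conf A} {ts : List (EST A)}
    (h : chain A c ts c') (hc : c ∈ CS A) : c' ∈ CS A := by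
  induction ts generalizing c with
  | nil => cases h; exact hc
  | cons e ts ih =>
    refine ih h.2.2 (Or.inr ⟨e, h.1, rfl⟩)

lemma chain_mem_ESet {A : Transducer α β} {c c' : Conf A} {ts : List (EST A)}
    (h : chain A c ts c') : ∀ e ∈ ts, e ∈ ESet A := by
  induction ts generalizing c with
  | nil => intro e he; cases he
  | cons e ts ih =>
    intro e' he'
    rcases he' with _ | he'
    · exact h.1
    · exact ih h.2.2 e' (by assumption)

/-- Split a chain at any input position. -/
lemma chain_split_input {A : Transducer α β} :
    ∀ (ts : List (EST A)) (c c' : Conf A), chain A c ts c' →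
    ∀ p ≤ (einp ts).length, ∃ G H m, ts = G ++ H ∧ chain A c G m ∧ chain A m H c' ∧
      (einp G).length = p := by
  intro ts
  induction ts with
  | nil =>
    intro c c' h p hp
    simp at hp
    exact ⟨[], [], c, rfl, rfl, h, by simp [hp]⟩
  | cons e ts ih =>
    intro c c' h p hp
    rcases Nat.eq_zero_or_pos p with rfl | hpos
    · exact ⟨[], e :: ts, c, rfl, rfl, h, rfl⟩
    have hee := estep_inp_le_one h.1
    interval_cases he1 : e.2.1.length
    · -- ε-input step
      obtain ⟨G, H, m, hsplit, hG, hH, hlen⟩ := ih _ _ h.2.2 p (by simpa [he1] using hp)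
      exact ⟨e :: G, H, m, by simp [hsplit], ⟨h.1, h.2.1, hG⟩, hH,
        by simp [hlen, List.length_eq_zero_iff.mp he1]⟩
    · -- letter step
      obtain ⟨G, H, m, hsplit, hG, hH, hlen⟩ := ih _ _ h.2.2 (p-1)
        (by simp [he1] at hp ⊢; omega)
      exact ⟨e :: G, H, m, by simp [hsplit], ⟨h.1, h.2.1, hG⟩, hH, by simp [hlen, he1]; omega⟩

lemma eout_length_le {A : Transducer α β} {MM : ℕ}
    (hMM : ∀ e ∈ ESet A, e.2.2.1.length ≤ MM) :
    ∀ ts : List (EST A), (∀ e ∈ ts, e ∈ ESet A) → (eout ts).length ≤ MM * ts.length := by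
  intro ts
  induction ts with
  | nil => simp
  | cons e ts ih =>
    intro h
    have h1 := hMM e (h e (by simp))
    have h2 := ih (fun e' he' => h e' (by simp [he']))
    simp only [eout_cons, List.length_append, List.length_cons]
    calc e.2.2.1.length + (eout ts).length ≤ MM + MM * ts.length := by omega
      _ = MM * (ts.length + 1) := by ring


/-- Any accepting chain can be replaced by a short one with the same input. -/
lemma exists_short_chain {A : Transducer α β} (q0 qf : A.Q) :
    ∀ (n : ℕ) (ts : List (EST A)), ts.length ≤ n →
    chain A (Sum.inl q0) ts (Sum.inl qf) →
    ∃ ts', chain A (Sum.inl q0) ts' (Sum.inl qf) ∧ einp ts' = einp ts ∧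
      ts'.length ≤ ((einp ts).length + 1) * (CS_finite A).toFinset.card := by
  classical
  intro n
  induction n with
  | zero =>
    intro ts hlen hch
    exact ⟨ts, hch, rfl, by omega⟩
  | succ n ih =>
    intro ts hlen hch
    by_cases hle : ts.length ≤ ((einp ts).length + 1) * (CS_finite A).toFinset.card
    · exact ⟨ts, hch, rfl, hle⟩
    push_neg at hle
    have hsp : ∀ i : ℕ, ∃ m, chain A (Sum.inl q0) (ts.take i) m ∧
        chain A m (ts.drop i) (Sum.inl qf) := by
      intro i
      have h2 := hch
      rw [← List.take_append_drop i ts] at h2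
      exact chain_split h2
    choose mfun hm1 hm2 using hsp
    have cut : ∀ i j, i < j → j ≤ ts.length → mfun i = mfun j →
        (einp (ts.take i)).length = (einp (ts.take j)).length →
        ∃ ts', chain A (Sum.inl q0) ts' (Sum.inl qf) ∧ einp ts' = einp ts ∧
          ts'.length < ts.length := by
      intro i j hij hjle hmeq hleq
      refine ⟨ts.take i ++ ts.drop j, chain_append (hm1 i) (hmeq ▸ hm2 j), ?_, ?_⟩
      · have htj : ts.take j = ts.take i ++ (ts.take j).drop i := by
          conv_lhs => rw [← List.take_append_drop i (ts.take j)]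
          rw [List.take_take, Nat.min_eq_left (by omega)]
        have hsplit2 : einp (ts.take j)
            = einp (ts.take i) ++ einp ((ts.take j).drop i) := by
          conv_lhs => rw [htj]
          rw [einp_append]
        have hmid : einp ((ts.take j).drop i) = [] := by
          have hl2 : (einp (ts.take j)).length
              = (einp (ts.take i)).length + (einp ((ts.take j).drop i)).length := by
            rw [hsplit2, List.length_append]
          rw [← List.length_eq_zero_iff]
          omega
        calc einp (ts.take i ++ ts.drop j) = einp (ts.take i) ++ einp (ts.drop j) := by simp
          _ = (einp (ts.take i) ++ einp ((ts.take j).drop i)) ++ einp (ts.drop j) := by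
              rw [hmid]; simp
          _ = einp (ts.take j) ++ einp (ts.drop j) := by rw [hsplit2]
          _ = einp ts := by rw [← einp_append, List.take_append_drop]
      · simp only [List.length_append, List.length_take, List.length_drop]
        omega
    -- pigeonhole
    have hmaps : ∀ i ∈ Finset.range (ts.length + 1),
        ((einp (ts.take i)).length, mfun i) ∈
          Finset.range ((einp ts).length + 1) ×ˢ (CS_finite A).toFinset := by
      intro i _
      rw [Finset.mem_product]
      constructor
      · rw [Finset.mem_range]
        have : einp ts = einp (ts.take i) ++ einp (ts.drop i) := by
          rw [← einp_append, List.take_append_drop]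
        have hl : (einp ts).length
            = (einp (ts.take i)).length + (einp (ts.drop i)).length := by
          rw [this, List.length_append]
        omega
      · rw [Set.Finite.mem_toFinset]
        exact chain_end_mem_CS (hm1 i) (Or.inl ⟨q0, rfl⟩)
    have hcard : (Finset.range ((einp ts).length + 1) ×ˢ (CS_finite A).toFinset).card
        < (Finset.range (ts.length + 1)).card := by
      rw [Finset.card_product, Finset.card_range, Finset.card_range]
      omega
    obtain ⟨i, hi, j, hj, hne, heq⟩ :=
      Finset.exists_ne_map_eq_of_card_lt_of_maps_to hcard hmaps
    rw [Finset.mem_range] at hi hj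
    have hmain : ∃ ts', chain A (Sum.inl q0) ts' (Sum.inl qf) ∧ einp ts' = einp ts ∧
        ts'.length < ts.length := by
      rcases lt_or_gt_of_ne hne with hij | hij
      · exact cut i j hij (by omega) (congrArg Prod.snd heq) (congrArg Prod.fst heq)
      · exact cut j i hij (by omega) (congrArg Prod.snd heq).symm
          (congrArg Prod.fst heq).symm
    obtain ⟨ts', hch', hinp', hlen'⟩ := hmain
    obtain ⟨ts'', hch'', hinp'', hlen''⟩ := ih ts' (by omega) hch'
    exact ⟨ts'', hch'', hinp''.trans hinp', by rw [hinp'] at hlen''; exact hlen''⟩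

lemma take_app_len_add' {γ : Type} (x y : List γ) (n : ℕ) :
    (x ++ y).take (x.length + n) = x ++ y.take n := by
  rw [List.take_append]
  congr 1
  · rw [List.take_of_length_le (by omega)]
  · congr 1; omega

/-- The simultaneous pumping lemma for two accepting runs over a common suffix. -/
lemma pump_lemma {A : Transducer α β} {u v w : List α} {yu yv : List β}
    (hu : (u ++ w, yu) ∈ A.T) (hv : (v ++ w, yv) ∈ A.T)
    (hw : (CS_finite A).toFinset.card * (CS_finite A).toFinset.card ≤ w.length) :
    ∃ w₁ w₂ w₃ : List α, w = w₁ ++ (w₂ ++ w₃) ∧ w₂ ≠ [] ∧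
    ∃ Au Bu Cu Av Bv Cv : List β,
      ∀ k, (u ++ (w₁ ++ (wpow w₂ k ++ w₃)), Au ++ (wpow Bu k ++ Cu)) ∈ A.T ∧
           (v ++ (w₁ ++ (wpow w₂ k ++ w₃)), Av ++ (wpow Bv k ++ Cv)) ∈ A.T := by
  classical
  obtain ⟨q0u, qfu, y'u, hIu, hFu, hRu, hyu⟩ := hu
  obtain ⟨q0v, qfv, y'v, hIv, hFv, hRv, hyv⟩ := hv
  obtain ⟨tsu, hchu, hinpu, houtu⟩ := run_to_chain hRu
  obtain ⟨tsv, hchv, hinpv, houtv⟩ := run_to_chain hRv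
  have hcutu : ∀ i : ℕ, ∃ G H m, i ≤ w.length → tsu = G ++ H ∧
      chain A (Sum.inl q0u) G m ∧ chain A m H (Sum.inl qfu) ∧
      (einp G).length = u.length + i := by
    intro i
    by_cases hi : i ≤ w.length
    · obtain ⟨G, H, m, h1, h2, h3, h4⟩ := chain_split_input tsu _ _ hchu (u.length + i)
        (by rw [hinpu]; simp; omega)
      exact ⟨G, H, m, fun _ => ⟨h1, h2, h3, h4⟩⟩
    · exact ⟨[], [], Sum.inl q0u, fun h => absurd h hi⟩
  have hcutv : ∀ i : ℕ, ∃ G H m, i ≤ w.length → tsv = G ++ H ∧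
      chain A (Sum.inl q0v) G m ∧ chain A m H (Sum.inl qfv) ∧
      (einp G).length = v.length + i := by
    intro i
    by_cases hi : i ≤ w.length
    · obtain ⟨G, H, m, h1, h2, h3, h4⟩ := chain_split_input tsv _ _ hchv (v.length + i)
        (by rw [hinpv]; simp; omega)
      exact ⟨G, H, m, fun _ => ⟨h1, h2, h3, h4⟩⟩
    · exact ⟨[], [], Sum.inl q0v, fun h => absurd h hi⟩
  choose Gu Hu mu hspecu using hcutu
  choose Gv Hv mv hspecv using hcutv
  have hmaps : ∀ i ∈ Finset.range (w.length + 1),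
      (mu i, mv i) ∈ (CS_finite A).toFinset ×ˢ (CS_finite A).toFinset := by
    intro i hi
    rw [Finset.mem_range] at hi
    obtain ⟨_, h2u, _, _⟩ := hspecu i (by omega)
    obtain ⟨_, h2v, _, _⟩ := hspecv i (by omega)
    rw [Finset.mem_product, Set.Finite.mem_toFinset, Set.Finite.mem_toFinset]
    exact ⟨chain_end_mem_CS h2u (Or.inl ⟨q0u, rfl⟩), chain_end_mem_CS h2v (Or.inl ⟨q0v, rfl⟩)⟩
  have hcard : ((CS_finite A).toFinset ×ˢ (CS_finite A).toFinset).card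
      < (Finset.range (w.length + 1)).card := by
    rw [Finset.card_product, Finset.card_range]
    omega
  obtain ⟨i0, hi0, j0, hj0, hne, heq⟩ :=
    Finset.exists_ne_map_eq_of_card_lt_of_maps_to hcard hmaps
  rw [Finset.mem_range] at hi0 hj0
  have key : ∀ i j : ℕ, i < j → j ≤ w.length → mu i = mu j → mv i = mv j →
      ∃ w₁ w₂ w₃ : List α, w = w₁ ++ (w₂ ++ w₃) ∧ w₂ ≠ [] ∧
      ∃ Au Bu Cu Av Bv Cv : List β,
        ∀ k, (u ++ (w₁ ++ (wpow w₂ k ++ w₃)), Au ++ (wpow Bu k ++ Cu)) ∈ A.T ∧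
             (v ++ (w₁ ++ (wpow w₂ k ++ w₃)), Av ++ (wpow Bv k ++ Cv)) ∈ A.T := by
    intro i j hij hjw hmu hmv
    obtain ⟨hsu_i, hGu_i, hHu_i, hlu_i⟩ := hspecu i (by omega)
    obtain ⟨hsu_j, hGu_j, hHu_j, hlu_j⟩ := hspecu j hjw
    obtain ⟨hsv_i, hGv_i, hHv_i, hlv_i⟩ := hspecv i (by omega)
    obtain ⟨hsv_j, hGv_j, hHv_j, hlv_j⟩ := hspecv j hjw
    have htj : w.take j = w.take i ++ (w.take j).drop i := by
      conv_lhs => rw [← List.take_append_drop i (w.take j)]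
      rw [List.take_take, Nat.min_eq_left (by omega)]
    have hwdec : w = w.take i ++ ((w.take j).drop i ++ w.drop j) := by
      rw [← List.append_assoc, ← htj, List.take_append_drop]
    have hw₂ne : (w.take j).drop i ≠ [] := by
      have hlen2 : ((w.take j).drop i).length = j - i := by
        rw [List.length_drop, List.length_take]
        omega
      rw [← List.length_pos_iff]
      omega
    have side : ∀ (x : List α) (q0 qf : A.Q) (ts G_i G_j H_i H_j : List (EST A))
        (m : Conf A), q0 ∈ A.I → qf ∈ A.F →
        einp ts = x ++ w → ts = G_i ++ H_i → ts = G_j ++ H_j →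
        chain A (Sum.inl q0) G_i m → chain A m H_i (Sum.inl qf) →
        chain A (Sum.inl q0) G_j m → chain A m H_j (Sum.inl qf) →
        (einp G_i).length = x.length + i → (einp G_j).length = x.length + j →
        ∃ Bx Cx : List β, ∀ k,
          (x ++ (w.take i ++ (wpow ((w.take j).drop i) k ++ w.drop j)),
            eout G_i ++ (wpow Bx k ++ Cx)) ∈ A.T := by
      intro x q0 qf ts G_i G_j H_i H_j m hq0 hqf hinp hs_i hs_j hG_i hH_i hG_j hH_j hl_i hl_j
      have hpre : G_i <+: G_j := by
        rcases List.prefix_or_prefix_of_prefix (l₃ := ts) ⟨H_i, hs_i.symm⟩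
          ⟨H_j, hs_j.symm⟩ with hp | hp
        · exact hp
        · obtain ⟨M, hM⟩ := hp
          have he : einp G_i = einp G_j ++ einp M := by rw [← hM, einp_append]
          have hlen : (einp G_i).length = (einp G_j).length + (einp M).length := by
            rw [he, List.length_append]
          exact absurd hlen (by omega)
      obtain ⟨M, hM⟩ := hpre
      have hchM : chain A m M m := by
        rw [← hM] at hG_j
        obtain ⟨c2, h1, h2⟩ := chain_split hG_j
        rwa [chain_unique h1 hG_i] at h2
      -- input identification
      have hGinp : ∀ (G H : List (EST A)) (n : ℕ), ts = G ++ H →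
          (einp G).length = x.length + n → einp G = x ++ w.take n := by
        intro G H n hs hl
        have h1 : einp ts = einp G ++ einp H := by rw [hs, einp_append]
        have h2 : einp G = (einp G ++ einp H).take (x.length + n) :=
          (List.take_left' hl).symm
        rw [← h1, hinp, take_app_len_add'] at h2
        exact h2
      have hinpG_i : einp G_i = x ++ w.take i := hGinp G_i H_i i hs_i hl_i
      have hinpG_j : einp G_j = x ++ w.take j := hGinp G_j H_j j hs_j hl_j
      have hinpH_j : einp H_j = w.drop j := by
        have h1 : einp ts = einp G_j ++ einp H_j := by rw [hs_j, einp_append]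
        have h2 : einp H_j = (einp G_j ++ einp H_j).drop (x.length + j) :=
          (List.drop_left' hl_j).symm
        rw [← h1, hinp] at h2
        rw [h2]
        exact List.drop_length_add_append j
      have hinpM : einp M = (w.take j).drop i := by
        have h1 : einp G_j = einp G_i ++ einp M := by rw [← hM, einp_append]
        rw [hinpG_i, hinpG_j, List.append_assoc] at h1
        have h2 := List.append_cancel_left h1
        rw [htj] at h2
        exact (List.append_cancel_left h2).symm
      refine ⟨eout M, eout H_j ++ A.o qf, ?_⟩
      intro k
      have hchk : chain A (Sum.inl q0) (G_i ++ (wpow M k ++ H_j)) (Sum.inl qf) :=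
        chain_append hG_i (chain_append (chain_wpow hchM k) hH_j)
      have hrun := chain_to_run hchk
      have hinp_k : einp (G_i ++ (wpow M k ++ H_j))
          = x ++ (w.take i ++ (wpow ((w.take j).drop i) k ++ w.drop j)) := by
        rw [einp_append, einp_append, einp_wpow, hinpG_i, hinpM, hinpH_j,
          List.append_assoc]
      have hout_k : eout (G_i ++ (wpow M k ++ H_j))
          = eout G_i ++ (wpow (eout M) k ++ eout H_j) := by
        rw [eout_append, eout_append, eout_wpow]
      refine ⟨q0, qf, eout (G_i ++ (wpow M k ++ H_j)), hq0, hqf, ?_, ?_⟩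
      · rw [← hinp_k]; exact hrun
      · show eout G_i ++ (wpow (eout M) k ++ (eout H_j ++ A.o qf)) = _
        rw [hout_k]
        simp [List.append_assoc]
    obtain ⟨Bu, Cu, hfamu⟩ := side u q0u qfu tsu (Gu i) (Gu j) (Hu i) (Hu j) (mu i)
      hIu hFu hinpu hsu_i hsu_j hGu_i hHu_i (hmu ▸ hGu_j) (hmu ▸ hHu_j) hlu_i hlu_j
    obtain ⟨Bv, Cv, hfamv⟩ := side v q0v qfv tsv (Gv i) (Gv j) (Hv i) (Hv j) (mv i)
      hIv hFv hinpv hsv_i hsv_j hGv_i hHv_i (hmv ▸ hGv_j) (hmv ▸ hHv_j) hlv_i hlv_j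
    exact ⟨w.take i, (w.take j).drop i, w.drop j, hwdec, hw₂ne,
      eout (Gu i), Bu, Cu, eout (Gv i), Bv, Cv, fun k => ⟨hfamu k, hfamv k⟩⟩
  rcases lt_or_gt_of_ne hne with hij | hij
  · exact key i0 j0 hij (by omega) (congrArg Prod.fst heq) (congrArg Prod.snd heq)
  · exact key j0 i0 hij (by omega) (congrArg Prod.fst heq).symm (congrArg Prod.snd heq).symm



lemma exists_eout_bound (A : Transducer α β) : ∃ MM, ∀ e ∈ ESet A, e.2.2.1.length ≤ MM := by
  have h : ((fun e : EST A => e.2.2.1.length) '' ESet A).Finite := (ESet_finite A).image _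
  obtain ⟨MM, hMM⟩ := h.bddAbove
  exact ⟨MM, fun e he => hMM ⟨e, he, rfl⟩⟩

lemma exists_o_bound (A : Transducer α β) : ∃ Mo, ∀ q : A.Q, (A.o q).length ≤ Mo := by
  haveI := A.finQ
  have h : (Set.range fun q : A.Q => (A.o q).length).Finite := Set.finite_range _
  obtain ⟨Mo, hMo⟩ := h.bddAbove
  exact ⟨Mo, fun q => hMo ⟨q, rfl⟩⟩

/-- Every value of the transduction can be realized with a short output. -/
lemma exists_K (A : Transducer α β) : ∃ K : ℕ, ∀ x y, (x, y) ∈ A.T →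
    ∃ y', (x, y') ∈ A.T ∧ y'.length ≤ K * (x.length + 1) := by
  obtain ⟨MM, hMM⟩ := exists_eout_bound A
  obtain ⟨Mo, hMo⟩ := exists_o_bound A
  refine ⟨MM * (CS_finite A).toFinset.card + Mo, ?_⟩
  rintro x y ⟨q0, qf, y', hI, hF, hR, hy⟩
  obtain ⟨ts, hch, hinp, hout⟩ := run_to_chain hR
  obtain ⟨ts', hch', hinp', hlen'⟩ := exists_short_chain q0 qf ts.length ts le_rfl hch
  have hrun' := chain_to_run hch'
  refine ⟨eout ts' ++ A.o qf, ⟨q0, qf, eout ts', hI, hF, ?_, rfl⟩, ?_⟩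
  · rw [← hinp, ← hinp']; exact hrun'
  · have h1 : (eout ts').length ≤ MM * ts'.length :=
      eout_length_le hMM ts' (chain_mem_ESet hch')
    have h2 : ts'.length ≤ (x.length + 1) * (CS_finite A).toFinset.card := by
      have h4 := hlen'
      rw [hinp] at h4
      exact h4
    have h3 := hMo qf
    have : (eout ts').length ≤ MM * ((x.length + 1) * (CS_finite A).toFinset.card) :=
      h1.trans (Nat.mul_le_mul_left MM h2)
    calc (eout ts' ++ A.o qf).length = (eout ts').length + (A.o qf).length := by simp
      _ ≤ MM * ((x.length + 1) * (CS_finite A).toFinset.card) + Mo := by omega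
      _ = MM * (CS_finite A).toFinset.card * (x.length + 1) + Mo := by ring
      _ ≤ MM * (CS_finite A).toFinset.card * (x.length + 1) + Mo * (x.length + 1) := by
          have : Mo ≤ Mo * (x.length + 1) := Nat.le_mul_of_pos_right Mo (by omega)
          omega
      _ = (MM * (CS_finite A).toFinset.card + Mo) * (x.length + 1) := by ring

lemma wpow_concat {B : Type} (w : List B) (k : ℕ) : wpow w (k + 1) = wpow w k ++ w := by
  show (List.replicate (k+1) w).flatten = _
  rw [List.replicate_succ', List.flatten_append]
  simp [wpow]

lemma wpow_reverse {B : Type} (w : List B) (k : ℕ) :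
    (wpow w k).reverse = wpow w.reverse k := by
  induction k with
  | zero => simp
  | succ k ih => rw [wpow_succ, List.reverse_append, ih, wpow_concat]

section Dist
variable {B : Type} [DecidableEq B]

lemma suffDist_eq_pd (x y : List B) : suffDist x y = pd x.reverse y.reverse := by
  simp [suffDist, pd]

lemma suffDist_rev3 (a b c a' b' c' : List B) :
    suffDist (a ++ (b ++ c)) (a' ++ (b' ++ c'))
      = pd (c.reverse ++ (b.reverse ++ a.reverse))
          (c'.reverse ++ (b'.reverse ++ a'.reverse)) := by
  rw [suffDist_eq_pd]
  congr 1 <;> simp [List.reverse_append]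

lemma suffDist_rev2 (a c a' c' : List B) :
    suffDist (a ++ c) (a' ++ c')
      = pd (c.reverse ++ a.reverse) (c'.reverse ++ a'.reverse) := by
  rw [suffDist_eq_pd]
  congr 1 <;> simp [List.reverse_append]

lemma suffDist_le_sum (x y : List B) : suffDist x y ≤ x.length + y.length :=
  Nat.sub_le _ _

end Dist

lemma pval_some {t : List α → Option (List β)} {x : List α} {y : List β}
    (h : t x = some y) : pval t x = y := by simp [pval, h]

/-- The main theorem, inside the namespace. -/
theorem main [DecidableEq β] (t : List α → Option (List β)) (hrat : IsRationalFun t) :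
    ∃ C : ℕ, ∀ u v w : List α, u ++ w ∈ pdom t → v ++ w ∈ pdom t → Rt t u v →
      suffDist (pval t (u ++ w)) (pval t (v ++ w)) ≤ C * (u.length + v.length + 2) := by
  classical
  obtain ⟨A, ht⟩ := hrat
  obtain ⟨K, hK⟩ := exists_K A
  obtain ⟨N, hN⟩ : ∃ N, N = (CS_finite A).toFinset.card * (CS_finite A).toFinset.card :=
    ⟨_, rfl⟩
  refine ⟨K * (N + 1), ?_⟩
  suffices H : ∀ n : ℕ, ∀ w u v : List α, w.length = n →
      u ++ w ∈ pdom t → v ++ w ∈ pdom t → Rt t u v →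
      suffDist (pval t (u ++ w)) (pval t (v ++ w))
        ≤ K * (N + 1) * (u.length + v.length + 2) by
    intro u v w h1 h2 h3
    exact H w.length w u v rfl h1 h2 h3
  intro n
  induction n using Nat.strong_induction_on with
  | _ n ih =>
  intro w u v hwn hu hv hRt
  obtain ⟨yu, hyu⟩ := Option.ne_none_iff_exists'.mp hu
  obtain ⟨yv, hyv⟩ := Option.ne_none_iff_exists'.mp hv
  have hTu : (u ++ w, yu) ∈ A.T := (ht _ _).mp hyu
  have hTv : (v ++ w, yv) ∈ A.T := (ht _ _).mp hyv
  rw [pval_some hyu, pval_some hyv]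
  by_cases hcase : w.length < N
  · -- short `w`: use the output-length bound
    obtain ⟨yu', hTu', hlu⟩ := hK _ _ hTu
    obtain ⟨yv', hTv', hlv⟩ := hK _ _ hTv
    have hyu' : yu' = yu := Option.some.inj (((ht _ _).mpr hTu').symm.trans hyu)
    have hyv' : yv' = yv := Option.some.inj (((ht _ _).mpr hTv').symm.trans hyv)
    rw [hyu'] at hlu
    rw [hyv'] at hlv
    have hl1 : (u ++ w).length = u.length + w.length := List.length_append
    have hl2 : (v ++ w).length = v.length + w.length := List.length_append
    calc suffDist yu yv ≤ yu.length + yv.length := suffDist_le_sum yu yv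
      _ ≤ K * (u.length + w.length + 1) + K * (v.length + w.length + 1) := by
          rw [hl1] at hlu; rw [hl2] at hlv; omega
      _ ≤ K * ((N + 1) * (u.length + v.length + 2)) := by
          have he : K * (u.length + w.length + 1) + K * (v.length + w.length + 1)
              = K * (u.length + v.length + 2 * w.length + 2) := by ring
          rw [he]
          apply Nat.mul_le_mul_left
          have he2 : (N + 1) * (u.length + v.length + 2)
              = N * (u.length + v.length) + (u.length + v.length) + 2 * N + 2 := by ring
          have he3 : 0 ≤ N * (u.length + v.length) := Nat.zero_le _
          omega
      _ = K * (N + 1) * (u.length + v.length + 2) := by ring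
  · -- long `w`: pump
    push_neg at hcase
    obtain ⟨w₁, w₂, w₃, hwdec, hw₂ne, Au, Bu, Cu, Av, Bv, Cv, hfam⟩ :=
      pump_lemma hTu hTv (by omega)
    have tu : ∀ k, t (u ++ (w₁ ++ (wpow w₂ k ++ w₃))) = some (Au ++ (wpow Bu k ++ Cu)) :=
      fun k => (ht _ _).mpr (hfam k).1
    have tv : ∀ k, t (v ++ (w₁ ++ (wpow w₂ k ++ w₃))) = some (Av ++ (wpow Bv k ++ Cv)) :=
      fun k => (ht _ _).mpr (hfam k).2
    obtain ⟨hdom, hfin⟩ := hRt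
    obtain ⟨D, hD⟩ := hfin.bddAbove
    have hband : ∀ k, suffDist (Au ++ (wpow Bu k ++ Cu)) (Av ++ (wpow Bv k ++ Cv)) ≤ D := by
      intro k
      apply hD
      refine ⟨w₁ ++ (wpow w₂ k ++ w₃), ?_, ?_, ?_⟩
      · show t _ ≠ none
        rw [tu k]; simp
      · show t _ ≠ none
        rw [tv k]; simp
      · rw [pval_some (tu k), pval_some (tv k)]
    have hpd : ∀ k, pd (Cu.reverse ++ (wpow Bu.reverse k ++ Au.reverse))
        (Cv.reverse ++ (wpow Bv.reverse k ++ Av.reverse)) ≤ D := by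
      intro k
      have hb := hband k
      rwa [suffDist_rev3, wpow_reverse, wpow_reverse] at hb
    have hM := lemmaM Bu.reverse Bv.reverse Cu.reverse Cv.reverse
      Au.reverse Av.reverse D hpd
    -- identify the values at `k = 1` and `k = 0`
    have hyu1 : yu = Au ++ (Bu ++ Cu) := by
      have h5 := tu 1
      simp only [wpow_one] at h5
      rw [← hwdec] at h5
      exact Option.some.inj (hyu.symm.trans h5)
    have hyv1 : yv = Av ++ (Bv ++ Cv) := by
      have h5 := tv 1
      simp only [wpow_one] at h5
      rw [← hwdec] at h5
      exact Option.some.inj (hyv.symm.trans h5)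
    have hzu : t (u ++ (w₁ ++ w₃)) = some (Au ++ Cu) := by
      have h6 := tu 0
      simpa using h6
    have hzv : t (v ++ (w₁ ++ w₃)) = some (Av ++ Cv) := by
      have h6 := tv 0
      simpa using h6
    have hlen : (w₁ ++ w₃).length < n := by
      have h7 := congrArg List.length hwdec
      simp only [List.length_append] at h7 ⊢
      have hw2pos : 0 < w₂.length := List.length_pos_iff.mpr hw₂ne
      omega
    have hIH := ih (w₁ ++ w₃).length (by omega) (w₁ ++ w₃) u v rfl
      (show t _ ≠ none by rw [hzu]; simp)
      (show t _ ≠ none by rw [hzv]; simp) ⟨hdom, hfin⟩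
    rw [pval_some hzu, pval_some hzv] at hIH
    calc suffDist yu yv
        = pd (Cu.reverse ++ (Bu.reverse ++ Au.reverse))
            (Cv.reverse ++ (Bv.reverse ++ Av.reverse)) := by
          rw [hyu1, hyv1, suffDist_rev3]
      _ = pd (Cu.reverse ++ Au.reverse) (Cv.reverse ++ Av.reverse) := hM
      _ = suffDist (Au ++ Cu) (Av ++ Cv) := (suffDist_rev2 Au Cu Av Cv).symm
      _ ≤ K * (N + 1) * (u.length + v.length + 2) := hIH

end S11

/-- short distances: for a rational function `t` with
suffix-closed domain there is a constant `C` such that `u R_t v` implies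
`‖t(uw), t(vw)‖ ≤ C(|u| + |v| + 2)` whenever `uw, vw ∈ dom t`. -/
theorem statement11 {α β : Type} [Fintype α] [Fintype β] [DecidableEq β]
    (t : List α → Option (List β)) (hrat : IsRationalFun t)
    (hsc : SuffixClosed (pdom t)) :
    ∃ C : ℕ, ∀ u v w : List α, u ++ w ∈ pdom t → v ++ w ∈ pdom t → Rt t u v →
      suffDist (pval t (u ++ w)) (pval t (v ++ w)) ≤ C * (u.length + v.length + 2) := by
  exact S11.main t hrat
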